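/- Let p be a prime and let k be an integer with 1 ≤ k ≤ p−1. If A and B are two root sets of type (k,p) (i.e. sets of k distinct complex roots of x^p = (−1)^{k+1}) such that the sum of the elements of A equals the sum of the elements of B, then A = B. In particular, the complex numbers p·(ζ₁+…+ζ_k), as {ζ₁,…,ζ_k} ranges over all root sets of type (k,p), are pairwise distinct. -/
import Mathlib

open Polynomial Finset

lemma coeffs_eq_of_sum_eq_zero (p : ℕ) (hp : Nat.Prime p) (ζ : ℂ)
    (hζ : IsPrimitiveRoot ζ p) (c : ℕ → ℚ)
    (h : ∑ i ∈ Finset.range p, (c i : ℂ) * ζ ^ i = 0) :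
    ∀ i < p, ∀ j < p, c i = c j := by
  haveI : Fact p.Prime := ⟨hp⟩
  set P : ℚ[X] := ∑ i ∈ Finset.range p, C (c i) * X ^ i with hP
  have hcoeff : ∀ n < p, P.coeff n = c n := by
    intro n hn
    rw [hP, finset_sum_coeff]
    simp only [coeff_C_mul, coeff_X_pow, mul_ite, mul_one, mul_zero]
    rw [Finset.sum_ite_eq (Finset.range p) n c]
    simp [hn]
  have hPeval : Polynomial.aeval ζ P = 0 := by
    rw [hP, map_sum]
    simpa using h
  have hmin : minpoly ℚ ζ = Polynomial.cyclotomic p ℚ :=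
    (Polynomial.cyclotomic_eq_minpoly_rat hζ hp.pos).symm
  have hdvd : Polynomial.cyclotomic p ℚ ∣ P := hmin ▸ minpoly.dvd ℚ ζ hPeval
  obtain ⟨q, hq⟩ := hdvd
  by_cases hq0 : q = 0
  · intro i hi j hj
    have hi' := hcoeff i hi
    have hj' := hcoeff j hj
    rw [hq, hq0, mul_zero] at hi' hj'
    simp only [coeff_zero] at hi' hj'
    rw [← hi', ← hj']
  · have hdegΦ : (Polynomial.cyclotomic p ℚ).natDegree = p - 1 := by
      rw [Polynomial.natDegree_cyclotomic, Nat.totient_prime hp]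
    have hdegP : P.natDegree ≤ p - 1 := by
      refine Polynomial.natDegree_sum_le_of_forall_le _ _ ?_
      intro i hi
      refine le_trans (Polynomial.natDegree_C_mul_le _ _) ?_
      simpa [Polynomial.natDegree_X_pow] using Nat.le_pred_of_lt (Finset.mem_range.mp hi)
    have hΦ0 : Polynomial.cyclotomic p ℚ ≠ 0 := Polynomial.cyclotomic_ne_zero p ℚ
    have hdegq : q.natDegree = 0 := by
      have hmul := Polynomial.natDegree_mul hΦ0 hq0
      rw [← hq, hdegΦ] at hmul
      omega
    have hqC : q = C (q.coeff 0) := Polynomial.eq_C_of_natDegree_eq_zero hdegq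
    have hΦcoeff : ∀ n < p, (Polynomial.cyclotomic p ℚ).coeff n = 1 := by
      intro n hn
      rw [Polynomial.cyclotomic_prime, finset_sum_coeff]
      simp only [coeff_X_pow]
      rw [Finset.sum_ite_eq (Finset.range p) n (fun _ => (1 : ℚ))]
      simp [hn]
    have key : ∀ n < p, c n = q.coeff 0 := by
      intro n hn
      have := hcoeff n hn
      rw [hq, hqC, Polynomial.coeff_mul_C, hΦcoeff n hn, one_mul] at this
      exact this.symm
    intro i hi j hj
    rw [key i hi, key j hj]



/-- A root set of type `(k,n)`: a set of `k` distinct complex numbers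
each satisfying `ζ^n = (-1)^(k+1)`. -/
def IsRootSet (k n : ℕ) (I : Finset ℂ) : Prop :=
  I.card = k ∧ ∀ z ∈ I, z ^ n = (-1 : ℂ) ^ (k + 1)

/-- If `p` is prime, two root sets of type `(k,p)` with the same element sum coincide;
in particular the numbers `p·(ζ₁+…+ζ_k)` over all root sets of type `(k,p)` are
pairwise distinct. -/
theorem rootSet_sum_injective_of_prime (p k : ℕ) (hp : Nat.Prime p)
    (hk1 : 1 ≤ k) (hk2 : k ≤ p - 1)
    (A B : Finset ℂ) (hA : IsRootSet k p A) (hB : IsRootSet k p B)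
    (hsum : ∑ z ∈ A, z = ∑ z ∈ B, z) :
    A = B := by
  haveI : NeZero p := ⟨hp.pos.ne'⟩
  set ε : ℂ := (-1) ^ (k + 1) with hε
  have hε2 : ε * ε = 1 := by
    rw [hε, ← pow_add]
    exact (neg_one_pow_eq_one_iff_even (by norm_num : (-1 : ℂ) ≠ 1)).mpr ⟨k + 1, by ring⟩
  have hεne : ε ≠ 0 := by
    intro h0
    rw [h0, mul_zero] at hε2
    exact one_ne_zero hε2.symm
  have hεp : ε ^ p = ε := by
    rcases Nat.even_or_odd k with hke | hko
    · obtain ⟨m, rfl⟩ := hke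
      have hpodd : Odd p := hp.odd_of_ne_two (by omega)
      have hεneg : ε = -1 := Odd.neg_one_pow (by exact ⟨m, by ring⟩)
      rw [hεneg]
      exact hpodd.neg_one_pow
    · have hke : Even (k + 1) := hko.add_one
      rw [hε, hke.neg_one_pow, one_pow]
  set ζ : ℂ := Complex.exp (2 * Real.pi * Complex.I / p) with hζdef
  have hζ : IsPrimitiveRoot ζ p := Complex.isPrimitiveRoot_exp p hp.pos.ne'
  set f : ℕ → ℂ := fun a => ε * ζ ^ a with hf
  have hinj : ∀ a < p, ∀ b < p, f a = f b → a = b := by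
    intro a ha b hb hab
    exact hζ.pow_inj ha hb (mul_left_cancel₀ hεne hab)
  -- representation of any root set
  have hrep : ∀ (T : Finset ℂ), (∀ z ∈ T, z ^ p = (-1 : ℂ) ^ (k + 1)) →
      T = ((Finset.range p).filter (fun a => f a ∈ T)).image f := by
    intro T hT
    ext z
    simp only [Finset.mem_image, Finset.mem_filter, Finset.mem_range]
    constructor
    · intro hz
      have hz' : (ε * z) ^ p = 1 := by
        rw [mul_pow, hεp, hT z hz, ← hε, hε2]
      obtain ⟨a, ha, hae⟩ := hζ.eq_pow_of_pow_eq_one hz'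
      refine ⟨a, ⟨ha, ?_⟩, ?_⟩
      · show ε * ζ ^ a ∈ T
        rw [hae, ← mul_assoc, hε2, one_mul]
        exact hz
      · show ε * ζ ^ a = z
        rw [hae, ← mul_assoc, hε2, one_mul]
    · rintro ⟨a, ⟨_, haT⟩, rfl⟩
      exact haT
  set SA := (Finset.range p).filter (fun a => f a ∈ A) with hSA
  set SB := (Finset.range p).filter (fun a => f a ∈ B) with hSB
  have hAeq : A = SA.image f := hrep A hA.2
  have hBeq : B = SB.image f := hrep B hB.2
  have hinjSA : Set.InjOn f SA := by
    intro a ha b hb hab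
    simp only [hSA, Finset.coe_filter, Set.mem_setOf_eq, Finset.mem_range] at ha hb
    exact hinj a ha.1 b hb.1 hab
  have hinjSB : Set.InjOn f SB := by
    intro a ha b hb hab
    simp only [hSB, Finset.coe_filter, Set.mem_setOf_eq, Finset.mem_range] at ha hb
    exact hinj a ha.1 b hb.1 hab
  have hcardA : SA.card = k := by
    rw [← hA.1, hAeq, Finset.card_image_of_injOn hinjSA]
  have hcardB : SB.card = k := by
    rw [← hB.1, hBeq, Finset.card_image_of_injOn hinjSB]
  -- sums
  have hsA : ∑ z ∈ A, z = ε * ∑ a ∈ SA, ζ ^ a := by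
    rw [hAeq, Finset.sum_image hinjSA, Finset.mul_sum]
  have hsB : ∑ z ∈ B, z = ε * ∑ a ∈ SB, ζ ^ a := by
    rw [hBeq, Finset.sum_image hinjSB, Finset.mul_sum]
  have hs : ∑ a ∈ SA, ζ ^ a = ∑ a ∈ SB, ζ ^ a := by
    apply mul_left_cancel₀ hεne
    rw [← hsA, ← hsB, hsum]
  -- indicator coefficients
  set c : ℕ → ℚ := fun a => (if a ∈ SA then 1 else 0) - (if a ∈ SB then 1 else 0) with hc
  have hsplit : ∀ (t : Finset ℕ), t ⊆ Finset.range p →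
      ∑ a ∈ Finset.range p, (if a ∈ t then ζ ^ a else 0) = ∑ a ∈ t, ζ ^ a := by
    intro t ht
    rw [Finset.sum_ite_mem, Finset.inter_eq_right.mpr ht]
  have h0 : ∑ i ∈ Finset.range p, (c i : ℂ) * ζ ^ i = 0 := by
    have step : ∀ i ∈ Finset.range p, (c i : ℂ) * ζ ^ i =
        (if i ∈ SA then ζ ^ i else 0) - (if i ∈ SB then ζ ^ i else 0) := by
      intro i _
      simp only [hc]
      split_ifs <;> push_cast <;> ring
    rw [Finset.sum_congr rfl step, Finset.sum_sub_distrib,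
      hsplit SA (Finset.filter_subset _ _), hsplit SB (Finset.filter_subset _ _), hs, sub_self]
  have heq := coeffs_eq_of_sum_eq_zero p hp ζ hζ c h0
  have hsumc : ∑ i ∈ Finset.range p, c i = 0 := by
    have hsplitQ : ∀ (t : Finset ℕ), t ⊆ Finset.range p →
        ∑ a ∈ Finset.range p, (if a ∈ t then (1 : ℚ) else 0) = t.card := by
      intro t ht
      rw [Finset.sum_ite_mem, Finset.inter_eq_right.mpr ht, Finset.sum_const, nsmul_eq_mul,
        mul_one]
    simp only [hc]
    rw [Finset.sum_sub_distrib, hsplitQ SA (Finset.filter_subset _ _),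
      hsplitQ SB (Finset.filter_subset _ _), hcardA, hcardB, sub_self]
  have hc0 : ∀ i < p, c i = 0 := by
    intro i hi
    have hall : ∀ j ∈ Finset.range p, c j = c i := fun j hj =>
      heq j (Finset.mem_range.mp hj) i hi
    rw [Finset.sum_congr rfl hall, Finset.sum_const, Finset.card_range, nsmul_eq_mul] at hsumc
    have hpne : (p : ℚ) ≠ 0 := Nat.cast_ne_zero.mpr hp.pos.ne'
    exact (mul_eq_zero.mp hsumc).resolve_left hpne
  have hSAB : SA = SB := by
    ext a
    by_cases ha : a < p
    · have := hc0 a ha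
      simp only [hc] at this
      constructor <;> intro hmem <;> by_contra hnm <;> simp [hmem, hnm] at this
    · constructor <;> intro hmem <;>
        · exfalso
          apply ha
          have := Finset.mem_filter.mp hmem
          exact Finset.mem_range.mp this.1
  rw [hAeq, hBeq, hSAB]
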